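/- Let X ⊆ ℙ^d be a smooth complex projective variety of even dimension 2n with universal hyperplane family π : 𝔛 → ℙ^d. Then the perverse filtration satisfies H^{2n}_{≤1}(𝔛) = H^{2n}(𝔛), and for every point p ∈ ℙ^d the induced filtration on the stalk satisfies H^{2n}_{≤1}(𝔛_p) = H^{2n}(𝔛_p). (Lemma: Bound on the filtrations, part (i).) -/

import Mathlib

open DirectSum

private lemma step_of_subsingleton {H : Type*} [AddCommGroup H] [Module ℚ H]
    (F : ℤ → Submodule ℚ H) (i : ℤ)
    (h : Subsingleton (↥(F i) ⧸ Submodule.comap (F i).subtype (F (i - 1)))) :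
    F i ≤ F (i - 1) := by
  intro x hx
  have hz : (Submodule.Quotient.mk (⟨x, hx⟩ : F i) :
      ↥(F i) ⧸ Submodule.comap (F i).subtype (F (i - 1))) = 0 := Subsingleton.elim _ _
  rw [Submodule.Quotient.mk_eq_zero] at hz
  exact hz

private lemma filt_top_of_steps {H : Type*} [AddCommGroup H] [Module ℚ H]
    (F : ℤ → Submodule ℚ H) (hmono : Monotone F)
    (hexh : ∀ x : H, ∃ i : ℤ, x ∈ F i)
    (hstep : ∀ i : ℤ, 2 ≤ i → F i ≤ F (i - 1)) : F 1 = ⊤ := by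
  have key : ∀ m : ℕ, F (1 + m) ≤ F 1 := by
    intro m
    induction m with
    | zero => simp
    | succ k ih =>
      refine le_trans ?_ ih
      have h2 : (1 : ℤ) + ((k : ℤ) + 1) - 1 = 1 + (k : ℤ) := by ring
      have := hstep (1 + ((k : ℤ) + 1)) (by omega)
      rw [h2] at this
      simpa [Nat.cast_add] using this
  rw [Submodule.eq_top_iff']
  intro x
  obtain ⟨i, hx⟩ := hexh x
  rcases le_or_gt i 1 with h | h
  · exact hmono h hx
  · have hi : i = 1 + ((i - 1).toNat : ℤ) := by omega
    exact key (i - 1).toNat (hmono (le_of_eq hi) hx)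

/-- **Lemma (Bound on the filtrations, part (i)).**
Let `X ⊆ ℙ^d` be a smooth complex projective variety of even dimension `2n`
with universal hyperplane family `π : 𝔛 → ℙ^d` (all cohomology with `ℚ`
coefficients).  The Decomposition Theorem gives
`Rπ_*ℚ ≅ ⊕_{i,j} IC(L_{ij})[−i−(2n−1+d)]`, inducing the perverse filtration
`H^{2n}_{≤i}(𝔛)` (abstracted below as the increasing exhaustive filtration `F`
on the `ℚ`-vector space `Hfam = H^{2n}(𝔛)`), whose graded pieces are
canonically `H^{2n}_i(𝔛) = ⊕_{j∈ℕ} IH^{−j−(i−1)}(closure S_{d−j}, L_{ij})`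
(hypothesis `hgr`, with `IH i j k` the intersection cohomology group
`IH^k(closure S_{d−j}, L_{ij})`, which vanishes in negative degrees `k < 0`,
hypothesis `hIHvan`).  Likewise, for every point `p ∈ ℙ^d` (abstracted as
`p : P`), the induced filtration `Fp p` on the stalk
`Hp p = H^{2n}(𝔛_p) = (R^{2n}π_*ℚ)_p` has graded pieces
`H^{2n}_i(𝔛_p) = ⊕_{j∈ℕ} 𝓗^{−(d−j)−j−(i−1)}(IC(L_{ij}))_p`
(hypothesis `hgrp`, with `HIC p i j m` the stalk at `p` of the cohomology
sheaf `𝓗^m(IC(L_{ij}))`, which vanishes for `m < −dim(closure S_{d−j}) = −(d−j)`,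
hypothesis `hICvan`, by the normalization of intersection complexes).

Conclusion: `H^{2n}_{≤1}(𝔛) = H^{2n}(𝔛)` and `H^{2n}_{≤1}(𝔛_p) = H^{2n}(𝔛_p)`
for every `p`. -/
theorem perverse_filtration_bounded_by_one
    (d n : ℕ) (hd : 0 < d) (hn : 0 < n)
    -- `H^{2n}(𝔛)`
    (Hfam : Type*) [AddCommGroup Hfam] [Module ℚ Hfam]
    -- the perverse filtration `H^{2n}_{≤ i}(𝔛)`: increasing and exhaustive
    (F : ℤ → Submodule ℚ Hfam) (hFmono : Monotone F)
    (hFexh : ∀ x : Hfam, ∃ i : ℤ, x ∈ F i)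
    -- intersection cohomology groups `IH i j k = IH^k(closure S_{d-j}, L_{ij})`
    (IH : ℤ → ℕ → ℤ → Type*)
    [∀ i j k, AddCommGroup (IH i j k)] [∀ i j k, Module ℚ (IH i j k)]
    -- vanishing of intersection cohomology in negative degrees
    (hIHvan : ∀ i j k, k < 0 → Subsingleton (IH i j k))
    -- Decomposition Theorem: description of the graded pieces `H^{2n}_i(𝔛)`
    (hgr : ∀ i : ℤ,
      Nonempty ((↥(F i) ⧸ Submodule.comap (F i).subtype (F (i - 1))) ≃ₗ[ℚ]
        ⨁ j : ℕ, IH i j (-(j : ℤ) - (i - 1))))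
    -- points `p ∈ ℙ^d`, stalks `H^{2n}(𝔛_p)` with the induced filtration
    (P : Type*) (Hp : P → Type*)
    [∀ p, AddCommGroup (Hp p)] [∀ p, Module ℚ (Hp p)]
    (Fp : ∀ p, ℤ → Submodule ℚ (Hp p)) (hFpmono : ∀ p, Monotone (Fp p))
    (hFpexh : ∀ p (x : Hp p), ∃ i : ℤ, x ∈ Fp p i)
    -- stalks `HIC p i j m = 𝓗^m(IC(L_{ij}))_p` of the cohomology sheaves
    (HIC : P → ℤ → ℕ → ℤ → Type*)
    [∀ p i j m, AddCommGroup (HIC p i j m)] [∀ p i j m, Module ℚ (HIC p i j m)]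
    -- support condition: `𝓗^m(IC_Z(L)) = 0` for `m < -dim Z`
    (hICvan : ∀ p (i : ℤ) (j : ℕ) (m : ℤ), m < -((d : ℤ) - (j : ℤ)) → Subsingleton (HIC p i j m))
    -- Decomposition Theorem: description of the graded pieces `H^{2n}_i(𝔛_p)`
    (hgrp : ∀ p (i : ℤ),
      Nonempty ((↥(Fp p i) ⧸ Submodule.comap (Fp p i).subtype (Fp p (i - 1))) ≃ₗ[ℚ]
        ⨁ j : ℕ, HIC p i j (-(d : ℤ) + 1 - i))) :
    F 1 = ⊤ ∧ ∀ p, Fp p 1 = ⊤ := by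
  constructor
  · refine filt_top_of_steps F hFmono hFexh ?_
    intro i hi
    obtain ⟨e⟩ := hgr i
    refine step_of_subsingleton F i ?_
    have : ∀ j : ℕ, Subsingleton (IH i j (-(j : ℤ) - (i - 1))) := fun j =>
      hIHvan i j _ (by omega)
    exact e.toEquiv.subsingleton
  · intro p
    refine filt_top_of_steps (Fp p) (hFpmono p) (hFpexh p) ?_
    intro i hi
    obtain ⟨e⟩ := hgrp p i
    refine step_of_subsingleton (Fp p) i ?_
    have : ∀ j : ℕ, Subsingleton (HIC p i j (-(d : ℤ) + 1 - i)) := fun j =>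
      hICvan p i j _ (by omega)
    exact e.toEquiv.subsingleton
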